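/- Every r-dimensional circular Hidden Markov Model can be simulated by an r²-dimensional circular Hidden Quantum Markov Model. Precisely: let A_t ∈ Matrix (Fin r) (Fin r) ℝ be column-stochastic transition matrices and C_t ∈ Matrix (Fin d) (Fin r) ℝ be column-stochastic emission matrices of a c-HMM with joint distribution p(o₁,…,o_N) = Σ_{x : Fin N → Fin r} (A_1(x_1, x_N) · Π_{t=2}^N A_t(x_t, x_{t-1})) · Π_{t=1}^N C_t(o_t, x_t). Then there exist Kraus ranks μ_t and Kraus operators K_{t,o,w} ∈ Matrix (Fin (r*r)) (Fin (r*r)) ℂ satisfying Σ_{o,w} K_{t,o,w}ᴴ K_{t,o,w} = 1 for each t, such that for every observation sequence (o₁,…,o_N): p(o₁,…,o_N) = trace((Σ_w conj(K_{N,o_N,w}) ⊗ₖ K_{N,o_N,w}) ⬝ ⋯ ⬝ (Σ_w conj(K_{1,o_1,w}) ⊗ₖ K_{1,o_1,w})). -/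

import Mathlib

open Matrix Kronecker BigOperators

/-- Ordered product `M (N-1) * ⋯ * M 1 * M 0` of a finite family of square matrices. -/
noncomputable def mprod {n : Type*} [Fintype n] [DecidableEq n] {N : ℕ}
    (M : Fin N → Matrix n n ℂ) : Matrix n n ℂ :=
  ((List.ofFn M).reverse).prod

section Aux
variable {n : Type*} [Fintype n] [DecidableEq n]

theorem mprod_zero (M : Fin 0 → Matrix n n ℂ) : mprod M = 1 := by
  simp [mprod]

theorem mprod_succ {N : ℕ} (M : Fin (N + 1) → Matrix n n ℂ) :
    mprod M = mprod (fun t => M t.succ) * M 0 := by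
  rw [mprod, List.ofFn_succ, List.reverse_cons, List.prod_append]
  simp [mprod]

theorem sum_cons_decomp {N : ℕ} {β : Type*} [AddCommMonoid β]
    (f : (Fin (N + 1) → n) → β) :
    ∑ x : Fin (N + 1) → n, f x
      = ∑ c : n, ∑ y : Fin N → n, f (Fin.cons c y) := by
  rw [← (Fin.consEquiv (fun _ => n)).sum_comp f, Fintype.sum_prod_type]
  rfl

theorem cons_add_one {m : ℕ} {α : Type*} (a : α) (x : Fin m → α) (t : Fin (m + 1)) :
    (Fin.cons a x : Fin (m + 1) → α) (t + 1) = (Fin.snoc x a : Fin (m + 1) → α) t := by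
  induction t using Fin.lastCases with
  | last => simp [Fin.last_add_one]
  | cast i => rw [Fin.coeSucc_eq_succ, Fin.cons_succ, Fin.snoc_castSucc]

theorem mprod_apply_chain : ∀ {N : ℕ} (M : Fin (N + 1) → Matrix n n ℂ) (a b : n),
    mprod M a b =
      ∑ x : Fin N → n, ∏ t : Fin (N + 1),
        M t ((Fin.snoc x a : Fin (N + 1) → n) t) ((Fin.cons b x : Fin (N + 1) → n) t) := by
  intro N
  induction N with
  | zero =>
    intro M a b
    rw [mprod_succ, mprod_zero, one_mul]
    simp [Fin.prod_univ_one]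
    rfl
  | succ N ih =>
    intro M a b
    rw [mprod_succ, Matrix.mul_apply]
    have key : ∀ c : n, mprod (fun t => M t.succ) a c =
        ∑ y : Fin N → n, ∏ t : Fin (N + 1),
          M t.succ ((Fin.snoc y a : Fin (N + 1) → n) t) ((Fin.cons c y : Fin (N + 1) → n) t) :=
      fun c => ih _ a c
    rw [sum_cons_decomp]
    refine Finset.sum_congr rfl (fun c _ => ?_)
    rw [key, Finset.sum_mul]
    refine Finset.sum_congr rfl (fun y _ => ?_)
    conv_rhs => rw [Fin.prod_univ_succ]
    rw [mul_comm]
    congr 1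
    · refine Finset.prod_congr rfl (fun t _ => ?_)
      have hs : (Fin.snoc (Fin.cons c y) a : Fin (N + 2) → n) t.succ
          = (Fin.snoc y a : Fin (N + 1) → n) t := by
        rw [← Fin.cons_snoc_eq_snoc_cons]
        rfl
      rw [hs]
      rfl

theorem trace_mprod {N : ℕ} [NeZero N] (M : Fin N → Matrix n n ℂ) :
    (mprod M).trace = ∑ x : Fin N → n, ∏ t : Fin N, M t (x (t + 1)) (x t) := by
  obtain ⟨m, rfl⟩ : ∃ m, N = m + 1 :=
    ⟨N - 1, (Nat.succ_pred_eq_of_pos (Nat.pos_of_ne_zero (NeZero.ne N))).symm⟩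
  rw [Matrix.trace]
  simp only [Matrix.diag]
  calc ∑ a : n, mprod M a a
      = ∑ a : n, ∑ x : Fin m → n, ∏ t : Fin (m + 1),
          M t ((Fin.snoc x a : Fin (m + 1) → n) t) ((Fin.cons a x : Fin (m + 1) → n) t) :=
        Finset.sum_congr rfl (fun a _ => mprod_apply_chain M a a)
    _ = ∑ x : Fin (m + 1) → n, ∏ t : Fin (m + 1), M t (x (t + 1)) (x t) := by
        rw [sum_cons_decomp (fun x => ∏ t : Fin (m + 1), M t (x (t + 1)) (x t))]
        refine Finset.sum_congr rfl (fun a _ => Finset.sum_congr rfl (fun x _ => ?_))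
        refine Finset.prod_congr rfl (fun t _ => ?_)
        rw [cons_add_one]

end Aux

def psiAux {N r : ℕ} (q : Fin r × Fin r ≃ Fin (r * r)) [NeZero r]
    (x : Fin N → Fin r) : Fin N → Fin (r * r) × Fin (r * r) :=
  fun t => (q (x t, 0), q (x t, 0))

theorem psiAux_injective {N r : ℕ} (q : Fin r × Fin r ≃ Fin (r * r)) [NeZero r] :
    Function.Injective (psiAux (N := N) q) := by
  intro x y h
  funext t
  have h1 : q (x t, 0) = q (y t, 0) := congrArg Prod.fst (congrFun h t)
  exact (Prod.ext_iff.mp (q.injective h1)).1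

/-- Every `r`-dimensional circular Hidden Markov Model can be simulated by an
`r²`-dimensional circular Hidden Quantum Markov Model: there are Kraus operators
`K_{t,o,w} ∈ ℂ^{r² × r²}` with `Σ_{o,w} K_{t,o,w}ᴴ K_{t,o,w} = 1` whose c-HQMM joint value
function reproduces the c-HMM joint distribution. -/
theorem chmm_to_chqmm {N r d : ℕ} [NeZero N]
    (A : Fin N → Matrix (Fin r) (Fin r) ℝ)
    (hA0 : ∀ (t : Fin N) (i j : Fin r), 0 ≤ A t i j)
    (hA1 : ∀ (t : Fin N) (j : Fin r), ∑ i : Fin r, A t i j = 1)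
    (C : Fin N → Matrix (Fin d) (Fin r) ℝ)
    (hC0 : ∀ (t : Fin N) (o : Fin d) (s : Fin r), 0 ≤ C t o s)
    (hC1 : ∀ (t : Fin N) (s : Fin r), ∑ o : Fin d, C t o s = 1)
    (p : (Fin N → Fin d) → ℝ)
    (hp : ∀ o : Fin N → Fin d,
      p o = ∑ x : Fin N → Fin r,
        (∏ t : Fin N, A t (x t) (x (t - 1))) * ∏ t : Fin N, C t (o t) (x t)) :
    ∃ (μ : Fin N → ℕ)
      (K : (t : Fin N) → Fin d → Fin (μ t) → Matrix (Fin (r * r)) (Fin (r * r)) ℂ),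
      (∀ t : Fin N,
        ∑ o : Fin d, ∑ w : Fin (μ t), (K t o w)ᴴ * K t o w = 1) ∧
      ∀ o : Fin N → Fin d,
        (p o : ℂ) =
          (mprod fun t : Fin N =>
            ∑ w : Fin (μ t),
              (K t (o t) w).map (starRingEnd ℂ) ⊗ₖ K t (o t) w).trace := by
  classical
  rcases Nat.eq_zero_or_pos r with hr | hr
  · -- degenerate case r = 0
    subst hr
    haveI hE : IsEmpty (Fin (0 * 0)) := ⟨fun i => absurd i.isLt (by simp)⟩
    refine ⟨fun _ => 1, fun _ _ _ => 0, fun t => ?_, fun o => ?_⟩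
    · ext i j
      exact isEmptyElim i
    · haveI : IsEmpty (Fin N → Fin 0) :=
        ⟨fun f => (f ⟨0, Nat.pos_of_ne_zero (NeZero.ne N)⟩).elim0⟩
      have hpo : p o = 0 := by
        rw [hp o]
        exact Finset.sum_of_isEmpty _
      rw [hpo]
      rw [Matrix.trace]
      simp
  · -- main case
    haveI : NeZero r := ⟨hr.ne'⟩
    set q : Fin r × Fin r ≃ Fin (r * r) := finProdFinEquiv with hqdef
    set K : (t : Fin N) → Fin d → Fin (r * r) → Matrix (Fin (r * r)) (Fin (r * r)) ℂ :=
      fun t o w => Matrix.of fun I J =>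
        if (q.symm I).2 = 0 ∧ J = w
        then ((Real.sqrt (C t o (q.symm I).1 * A t (q.symm I).1 (q.symm w).1) : ℝ) : ℂ)
        else 0 with hKdef
    have hKapp : ∀ (t : Fin N) (o : Fin d) (w : Fin (r * r)) (I J : Fin (r * r)),
        K t o w I J =
          if (q.symm I).2 = 0 ∧ J = w
          then ((Real.sqrt (C t o (q.symm I).1 * A t (q.symm I).1 (q.symm w).1) : ℝ) : ℂ)
          else 0 := fun _ _ _ _ _ => rfl
    have key : ∀ (g : Fin r → ℝ) (J J' w : Fin (r * r)),
        (∑ I : Fin (r * r),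
          star (if (q.symm I).2 = 0 ∧ J = w then ((g (q.symm I).1 : ℝ) : ℂ) else 0) *
            (if (q.symm I).2 = 0 ∧ J' = w then ((g (q.symm I).1 : ℝ) : ℂ) else 0))
        = if J = w ∧ J' = w then ((∑ i : Fin r, g i * g i : ℝ) : ℂ) else 0 := by
      intro g J J' w
      rw [← Equiv.sum_comp q]
      simp only [Equiv.symm_apply_apply]
      rw [Fintype.sum_prod_type]
      by_cases h1 : J = w <;> by_cases h2 : J' = w <;>
        simp [h1, h2, Complex.star_def, Complex.conj_ofReal, apply_ite (starRingEnd ℂ),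
          ite_mul, mul_ite, Complex.ofReal_sum, Complex.ofReal_mul]
    refine ⟨fun _ => r * r, K, ?_, ?_⟩
    · -- completeness
      intro t
      ext J J'
      simp only [Matrix.sum_apply, Matrix.mul_apply, Matrix.conjTranspose_apply, hKapp]
      have step1 : ∀ (o : Fin d) (w : Fin (r * r)),
          (∑ I : Fin (r * r),
            star (if (q.symm I).2 = 0 ∧ J = w
              then ((Real.sqrt (C t o (q.symm I).1 * A t (q.symm I).1 (q.symm w).1) : ℝ) : ℂ)
              else 0) *
            (if (q.symm I).2 = 0 ∧ J' = w
              then ((Real.sqrt (C t o (q.symm I).1 * A t (q.symm I).1 (q.symm w).1) : ℝ) : ℂ)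
              else 0))
          = if J = w ∧ J' = w
            then ((∑ i : Fin r, C t o i * A t i (q.symm w).1 : ℝ) : ℂ) else 0 := by
        intro o w
        rw [key (fun i => Real.sqrt (C t o i * A t i (q.symm w).1)) J J' w]
        congr 1
        congr 1
        exact Finset.sum_congr rfl fun i _ =>
          Real.mul_self_sqrt (mul_nonneg (hC0 t o i) (hA0 t i (q.symm w).1))
      calc (∑ o : Fin d, ∑ w : Fin (r * r), ∑ I : Fin (r * r),
            star (if (q.symm I).2 = 0 ∧ J = w
              then ((Real.sqrt (C t o (q.symm I).1 * A t (q.symm I).1 (q.symm w).1) : ℝ) : ℂ)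
              else 0) *
            (if (q.symm I).2 = 0 ∧ J' = w
              then ((Real.sqrt (C t o (q.symm I).1 * A t (q.symm I).1 (q.symm w).1) : ℝ) : ℂ)
              else 0))
          = ∑ o : Fin d, ∑ w : Fin (r * r),
              (if J = w ∧ J' = w
               then ((∑ i : Fin r, C t o i * A t i (q.symm w).1 : ℝ) : ℂ) else 0) :=
            Finset.sum_congr rfl fun o _ => Finset.sum_congr rfl fun w _ => step1 o w
        _ = (1 : Matrix (Fin (r * r)) (Fin (r * r)) ℂ) J J' := by
            by_cases hJJ : J = J'
            · subst hJJ
              simp only [and_self, Matrix.one_apply_eq]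
              rw [Finset.sum_comm]
              calc ∑ w : Fin (r * r), ∑ o : Fin d,
                    (if J = w then ((∑ i : Fin r, C t o i * A t i (q.symm w).1 : ℝ) : ℂ) else 0)
                  = ∑ w : Fin (r * r),
                    (if J = w
                     then ((∑ o : Fin d, ∑ i : Fin r, C t o i * A t i (q.symm w).1 : ℝ) : ℂ)
                     else 0) := by
                    refine Finset.sum_congr rfl fun w _ => ?_
                    by_cases h : J = w <;> simp [h, Complex.ofReal_sum]
                _ = ((∑ o : Fin d, ∑ i : Fin r, C t o i * A t i (q.symm J).1 : ℝ) : ℂ) := by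
                    rw [Finset.sum_ite_eq]
                    simp
                _ = 1 := by
                    rw [Finset.sum_comm]
                    have : ∀ i : Fin r, ∑ o : Fin d, C t o i * A t i (q.symm J).1
                        = A t i (q.symm J).1 := by
                      intro i
                      rw [← Finset.sum_mul, hC1 t i, one_mul]
                    rw [Finset.sum_congr rfl fun i _ => this i, hA1 t (q.symm J).1]
                    simp
            · rw [Matrix.one_apply_ne hJJ]
              refine Finset.sum_eq_zero fun o _ => Finset.sum_eq_zero fun w _ => ?_
              rw [if_neg]
              rintro ⟨rfl, h2⟩
              exact hJJ h2.symm
    · -- trace identity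
      intro o
      rw [trace_mprod, hp o, Complex.ofReal_sum]
      -- entry formula for the transition-matrix factors
      have hM : ∀ (t : Fin N) (I J : Fin (r * r) × Fin (r * r)),
          (∑ w : Fin (r * r), (K t (o t) w).map (starRingEnd ℂ) ⊗ₖ K t (o t) w) I J
          = if (q.symm I.1).2 = 0 ∧ (q.symm I.2).2 = 0 ∧ J.2 = J.1
            then ((Real.sqrt (C t (o t) (q.symm I.1).1 * A t (q.symm I.1).1 (q.symm J.1).1) *
                   Real.sqrt (C t (o t) (q.symm I.2).1 * A t (q.symm I.2).1 (q.symm J.1).1)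
                   : ℝ) : ℂ)
            else 0 := by
        intro t I J
        simp only [Matrix.sum_apply, Matrix.kroneckerMap_apply, Matrix.map_apply, hKapp]
        rw [Finset.sum_eq_single J.1]
        · by_cases e1 : (q.symm I.1).2 = 0 <;> by_cases e2 : (q.symm I.2).2 = 0 <;>
            by_cases e3 : J.2 = J.1 <;>
            simp [e1, e2, e3, Complex.conj_ofReal, Complex.ofReal_mul]
        · intro w _ hw
          rw [if_neg (fun h => hw h.2.symm)]
          simp
        · intro h
          exact absurd (Finset.mem_univ J.1) h
      -- vanishing off the diagonal image
      have hvan : ∀ X : Fin N → Fin (r * r) × Fin (r * r),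
          X ∉ Finset.image (psiAux q) Finset.univ →
          (∏ t : Fin N,
            (∑ w : Fin (r * r), (K t (o t) w).map (starRingEnd ℂ) ⊗ₖ K t (o t) w)
              (X (t + 1)) (X t)) = 0 := by
        intro X hX
        by_contra hF
        have hfac : ∀ t : Fin N,
            (∑ w : Fin (r * r), (K t (o t) w).map (starRingEnd ℂ) ⊗ₖ K t (o t) w)
              (X (t + 1)) (X t) ≠ 0 :=
          fun t => Finset.prod_ne_zero_iff.mp hF t (Finset.mem_univ t)
        have hcond : ∀ t : Fin N,
            (q.symm (X (t + 1)).1).2 = 0 ∧ (q.symm (X (t + 1)).2).2 = 0 ∧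
              (X t).2 = (X t).1 := by
          intro t
          have h := hfac t
          rw [hM t (X (t + 1)) (X t)] at h
          by_contra hc
          rw [if_neg hc] at h
          exact h rfl
        refine hX (Finset.mem_image.mpr ⟨fun t => (q.symm (X t).1).1, Finset.mem_univ _, ?_⟩)
        funext t
        have h1 : (q.symm (X t).1).2 = 0 := by
          have := (hcond (t - 1)).1
          rwa [sub_add_cancel] at this
        have h2 : (X t).2 = (X t).1 := (hcond t).2.2
        have hfst : (X t).1 = q ((q.symm (X t).1).1, 0) := by
          conv_lhs => rw [← q.apply_symm_apply (X t).1]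
          congr 1
          exact Prod.ext rfl h1
        refine Prod.ext ?_ ?_
        · exact hfst.symm
        · rw [h2]
          exact hfst.symm
      -- value on the diagonal image
      have hval : ∀ (x : Fin N → Fin r) (t : Fin N),
          (∑ w : Fin (r * r), (K t (o t) w).map (starRingEnd ℂ) ⊗ₖ K t (o t) w)
            (psiAux q x (t + 1)) (psiAux q x t)
          = ((C t (o t) (x (t + 1)) * A t (x (t + 1)) (x t) : ℝ) : ℂ) := by
        intro x t
        rw [hM t (psiAux q x (t + 1)) (psiAux q x t)]
        have hc : (q.symm (psiAux q x (t + 1)).1).2 = 0 ∧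
            (q.symm (psiAux q x (t + 1)).2).2 = 0 ∧
            (psiAux q x t).2 = (psiAux q x t).1 := by
          simp [psiAux]
        rw [if_pos hc]
        simp only [psiAux, Equiv.symm_apply_apply]
        rw [Real.mul_self_sqrt (mul_nonneg (hC0 t (o t) (x (t + 1))) (hA0 t (x (t + 1)) (x t)))]
      -- reindexing bijection
      have hbij : Function.Bijective
          (fun (x : Fin N → Fin r) => (fun t => x (t + 1) : Fin N → Fin r)) := by
        constructor
        · intro a b h
          funext t
          have := congrFun h (t - 1)
          simpa [sub_add_cancel] using this
        · intro y
          exact ⟨fun t => y (t - 1), by funext t; simp⟩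
      calc ∑ x : Fin N → Fin r,
            (((∏ t : Fin N, A t (x t) (x (t - 1))) * ∏ t : Fin N, C t (o t) (x t) : ℝ) : ℂ)
          = ∑ x : Fin N → Fin r,
              ∏ t : Fin N, ((C t (o t) (x (t + 1)) * A t (x (t + 1)) (x t) : ℝ) : ℂ) := by
            refine (Fintype.sum_bijective _ hbij
              (fun x => ∏ t : Fin N, ((C t (o t) (x (t + 1)) * A t (x (t + 1)) (x t) : ℝ) : ℂ))
              (fun y => (((∏ t : Fin N, A t (y t) (y (t - 1))) *
                ∏ t : Fin N, C t (o t) (y t) : ℝ) : ℂ))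
              (fun x => ?_)).symm
            push_cast
            rw [mul_comm, ← Finset.prod_mul_distrib]
            refine Finset.prod_congr rfl (fun t _ => ?_)
            rw [sub_add_cancel]
        _ = ∑ x : Fin N → Fin r,
              ∏ t : Fin N,
                (∑ w : Fin (r * r), (K t (o t) w).map (starRingEnd ℂ) ⊗ₖ K t (o t) w)
                  (psiAux q x (t + 1)) (psiAux q x t) :=
            Finset.sum_congr rfl fun x _ => Finset.prod_congr rfl fun t _ => (hval x t).symm
        _ = ∑ X ∈ Finset.image (psiAux q) Finset.univ,
              ∏ t : Fin N,
                (∑ w : Fin (r * r), (K t (o t) w).map (starRingEnd ℂ) ⊗ₖ K t (o t) w)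
                  (X (t + 1)) (X t) :=
            (Finset.sum_image
              (f := fun X : Fin N → Fin (r * r) × Fin (r * r) => ∏ t : Fin N,
                (∑ w : Fin (r * r), (K t (o t) w).map (starRingEnd ℂ) ⊗ₖ K t (o t) w)
                  (X (t + 1)) (X t))
              (g := psiAux q)
              (fun x _ y _ h => psiAux_injective q h)).symm
        _ = ∑ X : Fin N → Fin (r * r) × Fin (r * r),
              ∏ t : Fin N,
                (∑ w : Fin (r * r), (K t (o t) w).map (starRingEnd ℂ) ⊗ₖ K t (o t) w)
                  (X (t + 1)) (X t) :=
            Finset.sum_subset (Finset.subset_univ _) (fun X _ hX => hvan X hX)
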